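/- The critical exponent of the infinite Fibonacci word f equals 2 + α = (5 + √5)/2, where α = (1 + √5)/2; that is, the supremum over all nonempty factors w of f of the ratio |w|/p(w), where p(w) is the least period of w, equals (5 + √5)/2 (and this supremum is not attained). -/
import Mathlib


/-- The Fibonacci morphism φ: 0 ↦ 01, 1 ↦ 0. -/
def fibPhi (w : List ℕ) : List ℕ := (w.map (fun c => if c = 0 then [0, 1] else [0])).flatten

/-- The infinite Fibonacci word f = 0100101001001⋯, the fixed point of φ starting with 0. -/
def fibWord (i : ℕ) : ℕ := ((fibPhi^[i + 2]) [0]).getD i 0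

/-- A finite word is a factor of the infinite Fibonacci word. -/
def IsFibFactor (x : List ℕ) : Prop :=
  ∃ i : ℕ, x = (List.range x.length).map (fun t => fibWord (i + t))

/-- p ≥ 1 is a period of the finite word x. -/
def HasPeriod (x : List ℕ) (p : ℕ) : Prop :=
  1 ≤ p ∧ ∀ i : ℕ, i + p < x.length → x.getD i 0 = x.getD (i + p) 0

/-- The set of exponents |w|/p(w) of nonempty factors w of the Fibonacci word,
where p(w) is the least period of w. -/
def fibExponents : Set ℝ :=
  {r : ℝ | ∃ (x : List ℕ) (p : ℕ), IsFibFactor x ∧ x ≠ [] ∧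
    IsLeast {q : ℕ | HasPeriod x q} p ∧ r = (x.length : ℝ) / (p : ℝ)}

noncomputable section
namespace FibCrit

def aψ : ℝ := (Real.sqrt 5 - 1) / 2
def βv : ℝ := (3 - Real.sqrt 5) / 2
def ψ : ℝ := (1 - Real.sqrt 5) / 2

lemma s5sq : Real.sqrt 5 ^ 2 = 5 := Real.sq_sqrt (by norm_num)
lemma s5lb : (2.2 : ℝ) < Real.sqrt 5 := by
  have := Real.sq_sqrt (by norm_num : (5:ℝ) ≥ 0)
  nlinarith [Real.sqrt_nonneg 5]
lemma s5ub : Real.sqrt 5 < 2.25 := by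
  nlinarith [s5sq, Real.sqrt_nonneg 5]

lemma bpos : 0 < βv := by unfold βv; nlinarith [s5ub]
lemma bhalf : βv < 1/2 := by unfold βv; nlinarith [s5lb]
lemma apos : 0 < aψ := by unfold aψ; nlinarith [s5lb]
lemma alt1 : aψ < 1 := by unfold aψ; nlinarith [s5ub]
lemma ahalf : 1/2 < aψ := by unfold aψ; nlinarith [s5lb]
lemma ab1 : aψ + βv = 1 := by unfold aψ βv; ring
lemma asq : aψ ^ 2 = βv := by unfold aψ βv; nlinarith [s5sq]
lemma psi_neg : ψ = -aψ := by unfold ψ aψ; ring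
lemma psisq : ψ ^ 2 = ψ + 1 := by unfold ψ; nlinarith [s5sq]
lemma psisq' : ψ ^ 2 = βv := by unfold ψ βv; nlinarith [s5sq]
lemma abs_psi_pow (k : ℕ) : |ψ ^ k| = aψ ^ k := by
  rw [abs_pow, psi_neg, abs_neg, abs_of_pos apos]
lemma psi_even {k : ℕ} (h : Even k) : ψ ^ k = aψ ^ k := by
  rw [psi_neg, h.neg_pow]
lemma psi_odd {k : ℕ} (h : Odd k) : ψ ^ k = -aψ ^ k := by
  rw [psi_neg, h.neg_pow]
lemma apow_pos (k : ℕ) : 0 < aψ ^ k := pow_pos apos k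
lemma apow_lt_one {k : ℕ} (h : 1 ≤ k) : aψ ^ k < 1 :=
  pow_lt_one₀ apos.le alt1 (by omega)
lemma apow_anti {j k : ℕ} (h : j < k) : aψ ^ k < aψ ^ j :=
  pow_lt_pow_right_of_lt_one₀ apos alt1 h
lemma apow_anti_le {j k : ℕ} (h : j ≤ k) : aψ ^ k ≤ aψ ^ j :=
  pow_le_pow_of_le_one apos.le alt1.le h
lemma a3half : aψ ^ 3 < 1/2 := by
  have h : aψ < 0.7 := by unfold aψ; nlinarith [s5ub]
  have e : aψ ^ 3 = aψ * aψ * aψ := by ring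
  nlinarith [apos, h]
lemma a_split (k : ℕ) : aψ ^ k - aψ ^ (k+2) = aψ ^ (k+1) := by
  have : aψ ^ (k+2) = aψ ^ k * aψ ^ 2 := by ring
  have h2 : aψ ^ (k+1) = aψ ^ k * aψ := by ring
  rw [this, h2, asq]
  have := ab1
  ring_nf
  nlinarith [apow_pos k, ab1]

-- fib identity
lemma fib_beta (k : ℕ) : (Nat.fib (k+2) : ℝ) * βv = (Nat.fib k : ℝ) + ψ ^ (k+2) := by
  induction k using Nat.twoStepInduction with
  | zero =>
      have h2 : Nat.fib 2 = 1 := rfl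
      have h0 : Nat.fib 0 = 0 := rfl
      rw [h2, h0]; push_cast; rw [psisq']; ring
  | one =>
      have : (Nat.fib 3 : ℝ) = 2 := by norm_num [Nat.fib]
      rw [this]
      have h3 : ψ ^ 3 = ψ * ψ ^ 2 := by ring
      rw [show (Nat.fib 1 : ℝ) = 1 by norm_num [Nat.fib], h3, psisq]
      nlinarith [psisq, psisq']
  | more k ih1 ih2 =>
      have hf : (Nat.fib (k+4) : ℝ) = Nat.fib (k+3) + Nat.fib (k+2) := by
        rw [show k+4 = (k+2)+2 by ring, Nat.fib_add_two]; push_cast; ring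
      have hf2 : (Nat.fib (k+2) : ℝ) = Nat.fib (k+1) + Nat.fib k := by
        rw [Nat.fib_add_two]; push_cast; ring
      have e1 : ψ ^ (k+4) = ψ ^ (k+2) * ψ ^ 2 := by ring
      have e2 : ψ ^ (k+3) = ψ ^ (k+2) * ψ := by ring
      calc (Nat.fib (k+4) : ℝ) * βv = (Nat.fib (k+3) : ℝ) * βv + (Nat.fib (k+2) : ℝ) * βv := by
            rw [hf]; ring
        _ = (Nat.fib (k+1) : ℝ) + ψ^(k+3) + ((Nat.fib k : ℝ) + ψ^(k+2)) := by rw [ih2, ih1]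
        _ = (Nat.fib (k+2) : ℝ) + ψ ^ (k+4) := by
            rw [hf2, e1, e2, psisq]; ring

lemma fib_phisq (k : ℕ) : (Nat.fib (k+2) : ℝ) = ((3 + Real.sqrt 5)/2) * (Nat.fib k : ℝ) + ψ ^ k := by
  induction k using Nat.twoStepInduction with
  | zero => simp [Nat.fib]
  | one =>
      rw [show (Nat.fib 3 : ℝ) = 2 by norm_num [Nat.fib], show (Nat.fib 1 : ℝ) = 1 by norm_num [Nat.fib]]
      unfold ψ; ring
  | more k ih1 ih2 =>
      have hf : (Nat.fib (k+4) : ℝ) = Nat.fib (k+3) + Nat.fib (k+2) := by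
        rw [show k+4 = (k+2)+2 by ring, Nat.fib_add_two]; push_cast; ring
      have hf2 : (Nat.fib (k+2) : ℝ) = Nat.fib (k+1) + Nat.fib k := by
        rw [Nat.fib_add_two]; push_cast; ring
      have ih2' : (Nat.fib (k+3) : ℝ) = ((3 + Real.sqrt 5)/2) * (Nat.fib (k+1) : ℝ) + ψ ^ (k+1) := ih2
      calc (Nat.fib (k+4) : ℝ) = (Nat.fib (k+3) : ℝ) + (Nat.fib (k+2) : ℝ) := hf
        _ = ((3 + Real.sqrt 5)/2) * (Nat.fib (k+1) : ℝ) + ψ ^ (k+1)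
            + (((3 + Real.sqrt 5)/2) * (Nat.fib k : ℝ) + ψ ^ k) := by rw [ih2', ih1]
        _ = ((3 + Real.sqrt 5)/2) * ((Nat.fib (k+1) : ℝ) + (Nat.fib k : ℝ)) + ψ ^ k * (ψ + 1) := by ring
        _ = ((3 + Real.sqrt 5)/2) * (Nat.fib (k+2) : ℝ) + ψ ^ (k+2) := by
            rw [hf2, ← psisq]; ring


lemma exists_z (q : ℕ) (hq : 1 ≤ q) : ∃ z, 2 ≤ z ∧ Nat.fib z ≤ q ∧ q < Nat.fib (z+1) := by
  induction q with
  | zero => omega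
  | succ n ih =>
    rcases Nat.eq_or_lt_of_le hq with h1 | h2
    · have hf2 : Nat.fib 2 = 1 := by decide
      have hf3 : Nat.fib (2+1) = 2 := by decide
      exact ⟨2, by omega, by omega, by omega⟩
    · obtain ⟨z, hz2, hzl, hzu⟩ := ih (by omega)
      rcases Nat.lt_or_ge (n+1) (Nat.fib (z+1)) with h | h
      · exact ⟨z, hz2, by omega, h⟩
      · refine ⟨z+1, by omega, by omega, ?_⟩
        have h1 : n + 1 = Nat.fib (z+1) := by omega
        have h2 : 1 ≤ Nat.fib z := Nat.fib_pos.mpr (by omega)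
        have h3 : Nat.fib (z+1+1) = Nat.fib z + Nat.fib (z+1) := Nat.fib_add_two
        omega

lemma fract_in_Ico (x : ℝ) : 0 ≤ Int.fract x ∧ Int.fract x < 1 :=
  ⟨Int.fract_nonneg x, Int.fract_lt_one x⟩

/-- Master Zeckendorf-type bound: for fib z ≤ q < fib (z+1), z ≥ 2,
    the fractional part of q·β is in [aψ^z, 1 - aψ^z]. -/
lemma MZ : ∀ q z : ℕ, 2 ≤ z → Nat.fib z ≤ q → q < Nat.fib (z+1) →
    aψ ^ z ≤ Int.fract ((q : ℝ) * βv) ∧ Int.fract ((q : ℝ) * βv) ≤ 1 - aψ ^ z := by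
  intro q
  induction q using Nat.strong_induction_on with
  | _ q IH =>
  intro z hz2 hzl hzu
  obtain ⟨w, rfl⟩ : ∃ w, z = w + 2 := ⟨z - 2, by omega⟩
  set q' : ℕ := q - Nat.fib (w+2) with hq'
  have hfpos : 1 ≤ Nat.fib (w+2) := Nat.fib_pos.mpr (by omega)
  have hqq : q = q' + Nat.fib (w+2) := by omega
  have key : Int.fract ((q:ℝ) * βv) = Int.fract ((q':ℝ) * βv + ψ ^ (w+2)) := by
    have : (q:ℝ) * βv = ((q':ℝ) * βv + ψ ^ (w+2)) + ((Nat.fib w : ℤ) : ℝ) := by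
      rw [hqq]; push_cast
      have := fib_beta w
      nlinarith [fib_beta w]
    rw [this, Int.fract_add_intCast]
  rcases Nat.eq_zero_or_pos q' with h0 | hpos
  · -- q = fib (w+2) exactly
    rw [key, h0]
    push_cast
    rw [zero_mul, zero_add]
    rcases Nat.even_or_odd (w+2) with he | ho
    · rw [psi_even he]
      have h1 : aψ ^ (w+2) ≤ aψ ^ 2 := apow_anti_le (by omega)
      have h2 : Int.fract (aψ ^ (w+2)) = aψ ^ (w+2) :=
        Int.fract_eq_self.mpr ⟨(apow_pos _).le, apow_lt_one (by omega)⟩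
      rw [h2]
      constructor
      · linarith
      · nlinarith [asq, bhalf, apow_pos (w+2)]
    · rw [psi_odd ho]
      have h2 : Int.fract (-aψ ^ (w+2)) = 1 - aψ ^ (w+2) := by
        rw [show -aψ ^ (w+2) = (1 - aψ ^ (w+2)) + ((-1 : ℤ) : ℝ) by push_cast; ring,
          Int.fract_add_intCast]
        exact Int.fract_eq_self.mpr ⟨by nlinarith [apow_lt_one (show 1 ≤ w+2 by omega)],
          by nlinarith [apow_pos (w+2)]⟩
      rw [h2]
      have h1 : aψ ^ (w+2) ≤ aψ ^ 2 := apow_anti_le (by omega)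
      constructor
      · nlinarith [asq, bhalf]
      · linarith
  · -- q' ≥ 1
    obtain ⟨z', hz'2, hz'l, hz'u⟩ := exists_z q' hpos
    have hq'lt : q' < Nat.fib (w+1) := by
      have h3 : Nat.fib (w+2+1) = Nat.fib (w+1) + Nat.fib (w+1+1) := Nat.fib_add_two
      have h4 : Nat.fib (w+1+1) = Nat.fib (w+2) := rfl
      omega
    have hz'w : z' ≤ w := by
      by_contra hcon
      have : Nat.fib (w+1) ≤ Nat.fib z' := Nat.fib_mono (by omega)
      omega
    have hw2 : 2 ≤ w := by omega
    obtain ⟨h1, h2⟩ := IH q' (by omega) z' hz'2 hz'l hz'u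
    have h1' : aψ ^ w ≤ Int.fract ((q':ℝ) * βv) :=
      le_trans (apow_anti_le hz'w) h1
    have h2' : Int.fract ((q':ℝ) * βv) ≤ 1 - aψ ^ w := by
      have := apow_anti_le hz'w
      linarith
    set x := Int.fract ((q':ℝ) * βv) with hx
    have habs : |ψ ^ (w+2)| = aψ ^ (w+2) := abs_psi_pow _
    have hsplit : aψ ^ w - aψ ^ (w+2) = aψ ^ (w+1) := a_split w
    have hb1 : 0 ≤ x + ψ ^ (w+2) := by
      have := abs_le.mp habs.le
      have := (abs_le.mp (le_of_eq habs)).1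
      nlinarith [apow_pos (w+1), neg_abs_le (ψ^(w+2)), habs]
    have hb2 : x + ψ ^ (w+2) < 1 := by
      have hle : ψ ^ (w+2) ≤ aψ ^ (w+2) := le_of_abs_le habs.le
      nlinarith [apow_pos (w+1)]
    have key2 : Int.fract ((q':ℝ) * βv + ψ ^ (w+2)) = x + ψ ^ (w+2) := by
      rw [show (q':ℝ) * βv + ψ ^ (w+2) = (x + ψ ^ (w+2)) + (⌊(q':ℝ) * βv⌋ : ℝ) by
        rw [hx]; unfold Int.fract; ring, Int.fract_add_intCast]
      exact Int.fract_eq_self.mpr ⟨hb1, hb2⟩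
    rw [key, key2]
    have hpm := abs_le.mp (le_of_eq habs)
    constructor
    · have : aψ ^ (w+2) ≤ aψ ^ (w+1) := apow_anti_le (by omega)
      nlinarith [neg_abs_le (ψ^(w+2))]
    · have hle : ψ ^ (w+2) ≤ aψ ^ (w+2) := le_of_abs_le habs.le
      have : aψ ^ (w+2) ≤ aψ ^ (w+1) := apow_anti_le (by omega)
      nlinarith


/-! ### Word side -/

def S (n : ℕ) : List ℕ := fibPhi^[n] [0]

lemma S_succ (n : ℕ) : S (n+1) = fibPhi (S n) := Function.iterate_succ_apply' fibPhi n [0]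

lemma fibPhi_append (a b : List ℕ) : fibPhi (a ++ b) = fibPhi a ++ fibPhi b := by
  simp [fibPhi]

lemma S_add_two (n : ℕ) : S (n+2) = S (n+1) ++ S n := by
  induction n with
  | zero => rfl
  | succ n ih =>
      calc S (n+1+2) = fibPhi (S (n+2)) := S_succ (n+2)
        _ = fibPhi (S (n+1) ++ S n) := by rw [ih]
        _ = fibPhi (S (n+1)) ++ fibPhi (S n) := fibPhi_append _ _
        _ = S (n+2) ++ S (n+1) := by rw [← S_succ, ← S_succ]

lemma S_len (n : ℕ) : (S n).length = Nat.fib (n+2) := by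
  induction n using Nat.twoStepInduction with
  | zero => rfl
  | one => rfl
  | more n ih1 ih2 =>
      rw [S_add_two, List.length_append, ih1, ih2]
      have h3 : Nat.fib (n+2+2) = Nat.fib (n+2) + Nat.fib (n+2+1) := Nat.fib_add_two
      have h4 : Nat.fib (n+2+1) = Nat.fib (n+1+2) := rfl
      omega

lemma S_prefix (n : ℕ) : S n <+: S (n+1) := by
  cases n with
  | zero => exact ⟨[1], rfl⟩
  | succ n => rw [show n+1+1 = n+2 from rfl, S_add_two]; exact List.prefix_append _ _

lemma S_prefix_le {m n : ℕ} (h : m ≤ n) : S m <+: S n := by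
  induction n with
  | zero => rw [Nat.le_zero.mp h]
  | succ n ih =>
      rcases Nat.eq_or_lt_of_le h with h1 | h2
      · rw [h1]
      · exact (ih (by omega)).trans (S_prefix n)

lemma fib_big (n : ℕ) : n < Nat.fib (n+2) := by
  induction n with
  | zero => decide
  | succ n ih =>
      have h1 : 1 ≤ Nat.fib (n+1) := Nat.fib_pos.mpr (by omega)
      have h3 : Nat.fib (n+1+2) = Nat.fib (n+1) + Nat.fib (n+1+1) := Nat.fib_add_two
      have h4 : Nat.fib (n+1+1) = Nat.fib (n+2) := rfl
      omega

lemma getD_of_prefix {l1 l2 : List ℕ} (h : l1 <+: l2) {t : ℕ} (ht : t < l1.length) :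
    l1.getD t 0 = l2.getD t 0 := by
  obtain ⟨r, rfl⟩ := h
  rw [List.getD_append _ _ _ _ ht]

lemma fibWord_eq_S (t : ℕ) : fibWord t = (S (t+2)).getD t 0 := rfl

lemma fibWord_eq_getD {N t : ℕ} (h : t < (S N).length) : fibWord t = (S N).getD t 0 := by
  have hb : t < (S (t+2)).length := by
    rw [S_len]
    exact lt_of_lt_of_le (fib_big t) (Nat.fib_mono (by omega))
  rcases le_total N (t+2) with hle | hle
  · rw [fibWord_eq_S]
    exact (getD_of_prefix (S_prefix_le hle) h).symm
  · rw [fibWord_eq_S]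
    exact getD_of_prefix (S_prefix_le hle) hb

lemma W (k t : ℕ) (hl : Nat.fib (k+3) ≤ t) (hu : t < Nat.fib (k+4)) :
    fibWord t = fibWord (t - Nat.fib (k+3)) := by
  have h1 : fibWord t = (S (k+2)).getD t 0 := fibWord_eq_getD (by rw [S_len]; exact hu)
  have hlen : (S (k+1)).length = Nat.fib (k+3) := S_len (k+1)
  rw [h1, S_add_two, List.getD_append_right _ _ _ _ (by rw [hlen]; exact hl), hlen]
  have hfib : Nat.fib (k+4) = Nat.fib (k+2) + Nat.fib (k+3) := Nat.fib_add_two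
  exact (fibWord_eq_getD (by rw [S_len]; omega)).symm

/-! ### The floor formula -/

def gg (t : ℕ) : ℤ := ⌊((t:ℝ)+2)*βv⌋ - ⌊((t:ℝ)+1)*βv⌋

lemma fract_sub_floor (x : ℝ) : Int.fract x = x - ⌊x⌋ := rfl

lemma floor_stable (x δ : ℝ) (h0 : 0 ≤ Int.fract x + δ) (h1 : Int.fract x + δ < 1) :
    ⌊x + δ⌋ = ⌊x⌋ := by
  have hx := fract_sub_floor x
  refine Int.floor_eq_iff.mpr ⟨by linarith, ?_⟩
  push_cast
  linarith

lemma cross (k q : ℕ) (hq1 : 1 ≤ q) (hq : q ≤ Nat.fib (k+2) + 1) :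
    0 ≤ Int.fract ((q:ℝ)*βv) + ψ^(k+3) ∧ Int.fract ((q:ℝ)*βv) + ψ^(k+3) < 1 := by
  have habs : |ψ ^ (k+3)| = aψ ^ (k+3) := abs_psi_pow _
  have hpm := abs_le.mp (le_of_eq habs)
  rcases lt_or_ge q (Nat.fib (k+3)) with hlt | hge
  · obtain ⟨z, hz2, hzl, hzu⟩ := exists_z q hq1
    have hzk : z ≤ k+2 := by
      by_contra hcon
      have : Nat.fib (k+3) ≤ Nat.fib z := Nat.fib_mono (by omega)
      omega
    obtain ⟨h1, h2⟩ := MZ q z hz2 hzl hzu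
    have h1' : aψ ^ (k+2) ≤ Int.fract ((q:ℝ)*βv) := le_trans (apow_anti_le hzk) h1
    have h2' : Int.fract ((q:ℝ)*βv) ≤ 1 - aψ ^ (k+2) := by
      have := apow_anti_le hzk; linarith
    have hstep : aψ ^ (k+3) < aψ ^ (k+2) := apow_anti (by omega)
    constructor <;> nlinarith
  · have hqe : q = Nat.fib (k+3) := by
      have h3 : Nat.fib (k+1+2) = Nat.fib (k+1) + Nat.fib (k+1+1) := Nat.fib_add_two
      have h5 : 1 ≤ Nat.fib (k+1) := Nat.fib_pos.mpr (by omega)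
      have h4 : Nat.fib (k+1+1) = Nat.fib (k+2) := rfl
      have h6 : Nat.fib (k+1+2) = Nat.fib (k+3) := rfl
      omega
    have key : Int.fract ((q:ℝ)*βv) = Int.fract (ψ^(k+3)) := by
      rw [hqe]
      have hb := fib_beta (k+1)
      rw [show ((Nat.fib (k+3) : ℕ):ℝ) * βv = ψ^(k+3) + ((Nat.fib (k+1) : ℤ):ℝ) by
        push_cast at hb ⊢; rw [show k+1+2 = k+3 from rfl] at hb; linarith]
      rw [Int.fract_add_intCast]
    rw [key]
    have ha3 : aψ ^ (k+3) ≤ aψ ^ 3 := apow_anti_le (by omega)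
    rcases Nat.even_or_odd (k+3) with he | ho
    · rw [psi_even he]
      have hfr : Int.fract (aψ^(k+3)) = aψ^(k+3) :=
        Int.fract_eq_self.mpr ⟨(apow_pos (k+3)).le, apow_lt_one (by omega)⟩
      rw [hfr]
      constructor
      · nlinarith [apow_pos (k+3)]
      · nlinarith [a3half, apow_pos (k+3)]
    · rw [psi_odd ho]
      have h2 : Int.fract (-aψ ^ (k+3)) = 1 - aψ ^ (k+3) := by
        rw [show -aψ ^ (k+3) = (1 - aψ ^ (k+3)) + ((-1 : ℤ) : ℝ) by push_cast; ring,
          Int.fract_add_intCast]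
        exact Int.fract_eq_self.mpr ⟨by nlinarith [apow_lt_one (show 1 ≤ k+3 by omega)],
          by nlinarith [apow_pos (k+3)]⟩
      rw [h2]
      constructor
      · nlinarith [a3half]
      · nlinarith [apow_pos (k+3)]

lemma g_rec (k s : ℕ) (hs : s < Nat.fib (k+2)) : gg (s + Nat.fib (k+3)) = gg s := by
  have key : ∀ q : ℕ, 1 ≤ q → q ≤ Nat.fib (k+2) + 1 →
      ⌊((q + Nat.fib (k+3) : ℕ):ℝ)*βv⌋ = ⌊((q:ℕ):ℝ)*βv⌋ + (Nat.fib (k+1) : ℤ) := by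
    intro q h1 h2
    have hb := fib_beta (k+1)
    rw [show k+1+2 = k+3 from rfl] at hb
    have expand : ((q + Nat.fib (k+3) : ℕ):ℝ)*βv
        = ((q:ℝ)*βv + ψ^(k+3)) + ((Nat.fib (k+1) : ℤ):ℝ) := by
      push_cast at hb ⊢; nlinarith [hb]
    rw [expand, Int.floor_add_intCast]
    obtain ⟨hc0, hc1⟩ := cross k q h1 h2
    rw [floor_stable _ _ hc0 hc1]
  unfold gg
  have e1 := key (s+1) (by omega) (by omega)
  have e2 := key (s+2) (by omega) (by omega)
  have r1 : ((s + Nat.fib (k+3) : ℕ):ℝ) + 1 = ((s+1+Nat.fib (k+3) : ℕ):ℝ) := by push_cast; ring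
  have r2 : ((s + Nat.fib (k+3) : ℕ):ℝ) + 2 = ((s+2+Nat.fib (k+3) : ℕ):ℝ) := by push_cast; ring
  have r3 : ((s:ℕ):ℝ) + 1 = ((s+1 : ℕ):ℝ) := by push_cast; ring
  have r4 : ((s:ℕ):ℝ) + 2 = ((s+2 : ℕ):ℝ) := by push_cast; ring
  rw [r1, r2, r3, r4, e1, e2]
  ring

theorem formulaF : ∀ t : ℕ, (fibWord t : ℤ) = gg t := by
  intro t
  induction t using Nat.strong_induction_on with
  | _ t IH =>
  rcases t with _ | t1
  · have h0 : fibWord 0 = 0 := rfl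
    have g1 : ⌊(((0:ℕ):ℝ)+2)*βv⌋ = 0 := by
      rw [Int.floor_eq_zero_iff]
      constructor
      · push_cast; unfold βv; nlinarith [s5ub]
      · push_cast; unfold βv; nlinarith [s5lb]
    have g2 : ⌊(((0:ℕ):ℝ)+1)*βv⌋ = 0 := by
      rw [Int.floor_eq_zero_iff]
      constructor
      · push_cast; unfold βv; nlinarith [s5ub]
      · push_cast; unfold βv; nlinarith [s5lb]
    rw [h0]; unfold gg; rw [g1, g2]; rfl
  rcases t1 with _ | n
  · have h0 : fibWord 1 = 1 := rfl
    have g1 : ⌊(((1:ℕ):ℝ)+2)*βv⌋ = 1 := by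
      refine Int.floor_eq_iff.mpr ⟨?_, ?_⟩
      · push_cast; unfold βv; nlinarith [s5ub]
      · push_cast; unfold βv; nlinarith [s5lb]
    have g2 : ⌊(((1:ℕ):ℝ)+1)*βv⌋ = 0 := by
      rw [Int.floor_eq_zero_iff]
      constructor
      · push_cast; unfold βv; nlinarith [s5ub]
      · push_cast; unfold βv; nlinarith [s5lb]
    rw [h0]; unfold gg; rw [g1, g2]; rfl
  · set t := n + 2 with ht
    obtain ⟨z, hz2, hzl, hzu⟩ := exists_z t (by omega)
    have hz3 : 3 ≤ z := by
      by_contra hcon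
      have hzz : z = 2 := by omega
      subst hzz
      have : Nat.fib (2+1) = 2 := by decide
      omega
    obtain ⟨k, rfl⟩ : ∃ k, z = k + 3 := ⟨z - 3, by omega⟩
    have hfib : Nat.fib (k+4) = Nat.fib (k+2) + Nat.fib (k+3) := Nat.fib_add_two
    have hf1 : 1 ≤ Nat.fib (k+3) := Nat.fib_pos.mpr (by omega)
    set s := t - Nat.fib (k+3) with hs
    have hts : t = s + Nat.fib (k+3) := by omega
    have hsu : s < Nat.fib (k+2) := by
      have h4 : Nat.fib (k+3+1) = Nat.fib (k+4) := rfl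
      omega
    have hW : fibWord t = fibWord s := by
      have := W k t hzl (by rw [show k+3+1 = k+4 from rfl] at hzu; exact hzu)
      rwa [← hs] at this
    have hG : gg t = gg s := by rw [hts]; exact g_rec k s hsu
    rw [hW, hG]
    exact IH s (by omega)


/-! ### letter test -/

def fr (m : ℕ) : ℝ := Int.fract ((m:ℝ) * βv)

lemma fw_ite (t : ℕ) : (fibWord t : ℤ) = if aψ ≤ fr (t+1) then 1 else 0 := by
  rw [formulaF]
  unfold gg fr
  have h2 : ((t:ℝ)+2)*βv = ((t:ℝ)+1)*βv + βv := by ring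
  have hc : ((t+1:ℕ):ℝ) = (t:ℝ)+1 := by push_cast; ring
  rw [h2, hc]
  set x := ((t:ℝ)+1)*βv with hxdef
  have hx := fract_sub_floor x
  have hfl1 := Int.fract_lt_one x
  have hf0 := Int.fract_nonneg x
  split_ifs with h
  · have hfl : ⌊x + βv⌋ = ⌊x⌋ + 1 := by
      refine Int.floor_eq_iff.mpr ⟨?_, ?_⟩
      · push_cast; linarith [ab1]
      · push_cast; linarith [bhalf]
    rw [hfl]; ring
  · push_neg at h
    rw [floor_stable x βv (by linarith [bpos]) (by linarith [ab1])]
    ring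

lemma fw_one_iff (t : ℕ) : fibWord t = 1 ↔ aψ ≤ fr (t+1) := by
  have hi := fw_ite t
  constructor
  · intro h1
    by_contra h
    rw [if_neg h, h1] at hi
    norm_num at hi
  · intro h
    rw [if_pos h] at hi
    exact_mod_cast hi

lemma fw_match {a b : ℕ} (h : aψ ≤ fr (a+1) ↔ aψ ≤ fr (b+1)) : fibWord a = fibWord b := by
  have ha := fw_ite a
  have hb := fw_ite b
  by_cases hc : aψ ≤ fr (a+1)
  · rw [if_pos hc] at ha
    rw [if_pos (h.mp hc)] at hb
    have : (fibWord a : ℤ) = (fibWord b : ℤ) := by rw [ha, hb]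
    exact_mod_cast this
  · rw [if_neg hc] at ha
    rw [if_neg (fun hx => hc (h.mpr hx))] at hb
    have : (fibWord a : ℤ) = (fibWord b : ℤ) := by rw [ha, hb]
    exact_mod_cast this

/-! ### explicit hitting sequences -/

def ofn (j : ℕ) : ℤ := ⌊((j:ℝ)+1)*βv⌋
def σf (w j : ℕ) : ℤ := (Nat.fib (w+4) : ℤ) * j - (Nat.fib (w+2) : ℤ) * ofn j
def uf (j : ℕ) : ℝ := (j:ℝ)*βv - ((ofn j : ℤ) : ℝ)

lemma uf_lb (j : ℕ) : -βv ≤ uf j := by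
  unfold uf ofn
  have := Int.floor_le (((j:ℝ)+1)*βv)
  linarith

lemma uf_ub (j : ℕ) : uf j < 1 - βv := by
  unfold uf ofn
  have := Int.lt_floor_add_one (((j:ℝ)+1)*βv)
  linarith

lemma ofn_zero : ofn 0 = 0 := by
  unfold ofn
  rw [Int.floor_eq_zero_iff]
  constructor
  · push_cast; linarith [bpos]
  · push_cast; linarith [bhalf]

lemma uf_zero : uf 0 = 0 := by
  unfold uf
  rw [ofn_zero]
  push_cast; ring

lemma ofn_mono (j : ℕ) : ofn j ≤ ofn (j+1) := by
  unfold ofn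
  apply Int.floor_le_floor
  push_cast
  nlinarith [bpos]

lemma ofn_step (j : ℕ) : ofn (j+1) ≤ ofn j + 1 := by
  unfold ofn
  have : (((j+1:ℕ):ℝ)+1)*βv ≤ ((j:ℝ)+1)*βv + 1 := by push_cast; nlinarith [bhalf, bpos]
  calc ⌊(((j+1:ℕ):ℝ)+1)*βv⌋ ≤ ⌊((j:ℝ)+1)*βv + 1⌋ := Int.floor_le_floor this
    _ = ⌊((j:ℝ)+1)*βv⌋ + 1 := by
        rw [show ((j:ℝ)+1)*βv + 1 = ((j:ℝ)+1)*βv + ((1:ℤ):ℝ) by push_cast; ring,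
          Int.floor_add_intCast]

lemma cross2 {j : ℕ} (h1 : 0 ≤ uf j) (h2 : uf (j+1) ≤ 0) (hne : uf j ≠ 0 ∨ uf (j+1) ≠ 0) :
    ofn j + 1 ≤ ofn (j+1) := by
  unfold uf at h1 h2
  by_contra hcon
  push_neg at hcon
  have he : ofn (j+1) ≤ ofn j := by omega
  have hc : ((ofn (j+1) : ℤ):ℝ) ≤ ((ofn j : ℤ):ℝ) := by exact_mod_cast he
  have hj1 : ((j+1:ℕ):ℝ) = (j:ℝ) + 1 := by push_cast; ring
  rw [hj1] at h2
  rcases hne with hne | hne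
  · unfold uf at hne
    have : 0 < (j:ℝ)*βv - (ofn j : ℝ) := lt_of_le_of_ne h1 (Ne.symm hne)
    nlinarith [bpos]
  · unfold uf at hne
    rw [hj1] at hne
    have : ((j:ℝ)+1)*βv - (ofn (j+1) : ℝ) < 0 := lt_of_le_of_ne h2 hne
    nlinarith [bpos]

lemma fract_small_neg {y : ℝ} (h0 : -1 ≤ y) (h1 : y < 0) : Int.fract y = 1 + y := by
  have h2 : Int.fract (y + ((1:ℤ):ℝ)) = Int.fract y := Int.fract_add_intCast y 1
  rw [← h2, Int.fract_eq_self.mpr ⟨by push_cast; linarith, by push_cast; linarith⟩]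
  push_cast; ring

lemma fract_sigma (w j : ℕ) (c : ℤ) :
    Int.fract ((((σf w j + c * (Nat.fib (w+2) : ℤ)) : ℤ) : ℝ) * βv)
      = Int.fract (ψ^(w+2) * (uf j + c)) := by
  have hb1 := fib_beta (w+2)
  have hb2 := fib_beta w
  rw [show w+2+2 = w+4 from rfl] at hb1
  have e : ψ^(w+4) = ψ^(w+2) * βv := by rw [← psisq']; ring
  have key : (((σf w j + c * (Nat.fib (w+2) : ℤ)) : ℤ) : ℝ) * βv
      = ψ^(w+2) * (uf j + c)
        + (((Nat.fib (w+2) : ℤ) * j - (Nat.fib w : ℤ) * ofn j + c * (Nat.fib w : ℤ) : ℤ) : ℝ) := by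
    unfold σf uf
    push_cast
    linear_combination (j:ℝ) * hb1 + ((c:ℝ) - ((ofn j : ℤ):ℝ)) * hb2 + (j:ℝ) * e
  rw [key, Int.fract_add_intCast]

/-- generic skeleton -/
lemma seq_skeleton (G : ℤ) (hG : 1 ≤ G) (h : ℕ → ℤ) (T : ℝ → Prop)
    (hmem : ∀ j, T (Int.fract (((h j : ℤ) : ℝ) * βv)))
    (h0 : h 0 ≤ G)
    (hgapU : ∀ j, h (j+1) ≤ h j + G)
    (hmono : ∀ j, h j < h (j+1))
    (m0 : ℕ) :
    ∃ m : ℕ, (m0:ℤ) < (m:ℤ) ∧ (m:ℤ) ≤ (m0:ℤ) + G ∧ T (fr m) := by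
  classical
  have hgrow : ∀ j : ℕ, h 0 + j ≤ h j := by
    intro j
    induction j with
    | zero => simp
    | succ j ih =>
        have := hmono j
        push_cast
        push_cast at ih
        omega
  have hex : ∃ j : ℕ, (m0:ℤ) < h j := by
    refine ⟨((m0:ℤ) + 1 - h 0).toNat, ?_⟩
    have := hgrow ((m0:ℤ) + 1 - h 0).toNat
    have h2 : ((m0:ℤ) + 1 - h 0) ≤ (((m0:ℤ) + 1 - h 0).toNat : ℤ) := Int.self_le_toNat _
    omega
  set jd := Nat.find hex with hjd
  have hPj : (m0:ℤ) < h jd := Nat.find_spec hex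
  have hle : h jd ≤ (m0:ℤ) + G := by
    rcases Nat.eq_zero_or_pos jd with h0' | hpos
    · rw [h0']; omega
    · obtain ⟨k, hk⟩ : ∃ k, jd = k + 1 := ⟨jd - 1, by omega⟩
      have hnk : ¬ ((m0:ℤ) < h k) := Nat.find_min hex (by omega)
      push_neg at hnk
      have := hgapU k
      rw [hk]
      omega
  refine ⟨(h jd).toNat, ?_, ?_, ?_⟩
  · rw [Int.toNat_of_nonneg (by omega)]; exact hPj
  · rw [Int.toNat_of_nonneg (by omega)]; exact hle
  · have hc : (((h jd).toNat : ℕ) : ℝ) = ((h jd : ℤ) : ℝ) := by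
      rw [← Int.cast_natCast, Int.toNat_of_nonneg (by omega)]
    unfold fr
    rw [hc]
    exact hmem jd


lemma σf_step (w j : ℕ) :
    σf w (j+1) = σf w j + (Nat.fib (w+4):ℤ) - (Nat.fib (w+2):ℤ) * (ofn (j+1) - ofn j) := by
  unfold σf; push_cast; ring

lemma fibz (w : ℕ) : 2*(Nat.fib (w+2):ℤ) + 1 ≤ (Nat.fib (w+4):ℤ) := by
  have a : Nat.fib (w+2+2) = Nat.fib (w+2) + Nat.fib (w+2+1) := Nat.fib_add_two
  have b : Nat.fib (w+1+2) = Nat.fib (w+1) + Nat.fib (w+1+1) := Nat.fib_add_two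
  have c1 : Nat.fib (w+2+1) = Nat.fib (w+1+2) := rfl
  have c2 : Nat.fib (w+1+1) = Nat.fib (w+2) := rfl
  have c3 : Nat.fib (w+2+2) = Nat.fib (w+4) := rfl
  have hp : 1 ≤ Nat.fib (w+1) := Nat.fib_pos.mpr (by omega)
  omega

lemma σf_zero (w : ℕ) : σf w 0 = 0 := by
  unfold σf; rw [ofn_zero]; push_cast; ring

lemma apow_facts (n : ℕ) (hn : 1 ≤ n) :
    0 < aψ^n ∧ aψ^n < 1 := ⟨apow_pos n, apow_lt_one hn⟩

set_option maxHeartbeats 1000000 in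
theorem hit1 (w m0 : ℕ) :
    ∃ m : ℕ, m0 < m ∧ m ≤ m0 + Nat.fib (w+4) ∧ 1 - aψ^(w+2) ≤ fr m := by
  have hA : 0 < aψ^(w+2) := apow_pos _
  have hA1 : aψ^(w+2) < 1 := apow_lt_one (by omega)
  have hF2 : (1:ℤ) ≤ (Nat.fib (w+2):ℤ) := by exact_mod_cast Nat.fib_pos.mpr (by omega)
  have hGb := fibz w
  rcases Nat.even_or_odd w with hw | hw
  · -- even w
    have hpsiE : ψ^(w+2) = aψ^(w+2) := psi_even (by rcases hw with ⟨k, hk⟩; exact ⟨k+1, by omega⟩)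
    set h : ℕ → ℤ := fun j => σf w j - (if 0 ≤ uf j then (Nat.fib (w+2):ℤ) else 0) with hh
    have hmem : ∀ j, 1 - aψ^(w+2) ≤ Int.fract (((h j : ℤ) : ℝ) * βv) := by
      intro j
      have hub := uf_ub j
      have hlb := uf_lb j
      by_cases hu : 0 ≤ uf j
      · have he : h j = σf w j + (-1) * (Nat.fib (w+2):ℤ) := by
          rw [hh]; simp [hu]; ring
        rw [he, fract_sigma, hpsiE]
        have harg : aψ^(w+2) * (uf j + ((-1:ℤ):ℝ)) = aψ^(w+2) * (uf j - 1) := by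
          push_cast; ring
        rw [harg]
        rw [fract_small_neg (by nlinarith) (by nlinarith [bpos, ab1])]
        nlinarith
      · push_neg at hu
        have he : h j = σf w j + (0:ℤ) * (Nat.fib (w+2):ℤ) := by
          rw [hh]; simp [not_le.mpr hu]
        rw [he, fract_sigma, hpsiE]
        have harg : aψ^(w+2) * (uf j + ((0:ℤ):ℝ)) = aψ^(w+2) * uf j := by push_cast; ring
        rw [harg]
        rw [fract_small_neg (by nlinarith [bhalf]) (by nlinarith)]
        nlinarith [bhalf]
    have h0 : h 0 ≤ (Nat.fib (w+4):ℤ) := by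
      rw [hh]; simp [σf_zero, uf_zero]; try omega
    have hgapU : ∀ j, h (j+1) ≤ h j + (Nat.fib (w+4):ℤ) := by
      intro j
      have hst := σf_step w j
      have hm := ofn_mono j
      have hsp := ofn_step j
      rw [hh]
      by_cases hu : 0 ≤ uf j <;> by_cases hu' : 0 ≤ uf (j+1)
      · simp only [if_pos hu, if_pos hu']
        nlinarith [hF2]
      · simp only [if_pos hu, if_neg (not_le.mpr (by push_neg at hu'; exact hu'))]
        push_neg at hu'
        have hc := cross2 hu hu'.le (Or.inr (ne_of_lt hu'))
        nlinarith [hF2]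
      · simp only [if_neg (not_le.mpr (by push_neg at hu; exact hu)), if_pos hu']
        nlinarith [hF2]
      · simp only [if_neg hu, if_neg hu']
        nlinarith [hF2]
    have hmono : ∀ j, h j < h (j+1) := by
      intro j
      have hst := σf_step w j
      have hm := ofn_mono j
      have hsp := ofn_step j
      rw [hh]
      by_cases hu : 0 ≤ uf j <;> by_cases hu' : 0 ≤ uf (j+1)
      · simp only [if_pos hu, if_pos hu']; nlinarith [hF2, hGb]
      · simp only [if_pos hu, if_neg hu']; nlinarith [hF2, hGb]
      · simp only [if_neg hu, if_pos hu']; nlinarith [hF2, hGb]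
      · simp only [if_neg hu, if_neg hu']; nlinarith [hF2, hGb]
    obtain ⟨m, h1, h2, h3⟩ := seq_skeleton (Nat.fib (w+4):ℤ) (by omega) h
      (fun y => 1 - aψ^(w+2) ≤ y) hmem h0 hgapU hmono m0
    exact ⟨m, by exact_mod_cast h1, by exact_mod_cast h2, h3⟩
  · -- odd w
    have hpsiO : ψ^(w+2) = -aψ^(w+2) := psi_odd (by rcases hw with ⟨k, hk⟩; exact ⟨k+1, by omega⟩)
    set h : ℕ → ℤ := fun j => σf w j + (if uf j ≤ 0 then (Nat.fib (w+2):ℤ) else 0) with hh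
    have hmem : ∀ j, 1 - aψ^(w+2) ≤ Int.fract (((h j : ℤ) : ℝ) * βv) := by
      intro j
      have hub := uf_ub j
      have hlb := uf_lb j
      by_cases hu : uf j ≤ 0
      · have he : h j = σf w j + (1:ℤ) * (Nat.fib (w+2):ℤ) := by
          rw [hh]; simp [hu]
        rw [he, fract_sigma, hpsiO]
        have harg : (-aψ^(w+2)) * (uf j + ((1:ℤ):ℝ)) = -(aψ^(w+2) * (uf j + 1)) := by
          push_cast; ring
        rw [harg]
        rw [fract_small_neg (by nlinarith [bhalf]) (by nlinarith [bpos, bhalf, ab1])]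
        nlinarith [bhalf]
      · push_neg at hu
        have he : h j = σf w j + (0:ℤ) * (Nat.fib (w+2):ℤ) := by
          rw [hh]; simp [not_le.mpr hu]
        rw [he, fract_sigma, hpsiO]
        have harg : (-aψ^(w+2)) * (uf j + ((0:ℤ):ℝ)) = -(aψ^(w+2) * uf j) := by push_cast; ring
        rw [harg]
        rw [fract_small_neg (by nlinarith [ab1, bpos]) (by nlinarith)]
        nlinarith [ab1, bpos]
    have h0 : h 0 ≤ (Nat.fib (w+4):ℤ) := by
      rw [hh]; simp [σf_zero, uf_zero]; try omega
    have hgapU : ∀ j, h (j+1) ≤ h j + (Nat.fib (w+4):ℤ) := by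
      intro j
      have hst := σf_step w j
      have hm := ofn_mono j
      have hsp := ofn_step j
      rw [hh]
      by_cases hu : uf j ≤ 0 <;> by_cases hu' : uf (j+1) ≤ 0
      · simp only [if_pos hu, if_pos hu']
        nlinarith [hF2]
      · simp only [if_pos hu, if_neg hu']
        nlinarith [hF2]
      · -- uf j > 0, uf (j+1) ≤ 0 : bad case
        simp only [if_neg hu, if_pos hu']
        push_neg at hu
        have hc := cross2 hu.le hu' (Or.inl (ne_of_gt hu))
        nlinarith [hF2]
      · simp only [if_neg hu, if_neg hu']
        nlinarith [hF2]
    have hmono : ∀ j, h j < h (j+1) := by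
      intro j
      have hst := σf_step w j
      have hm := ofn_mono j
      have hsp := ofn_step j
      rw [hh]
      by_cases hu : uf j ≤ 0 <;> by_cases hu' : uf (j+1) ≤ 0
      · simp only [if_pos hu, if_pos hu']; nlinarith [hF2, hGb]
      · simp only [if_pos hu, if_neg hu']; nlinarith [hF2, hGb]
      · simp only [if_neg hu, if_pos hu']; nlinarith [hF2, hGb]
      · simp only [if_neg hu, if_neg hu']; nlinarith [hF2, hGb]
    obtain ⟨m, h1, h2, h3⟩ := seq_skeleton (Nat.fib (w+4):ℤ) (by omega) h
      (fun y => 1 - aψ^(w+2) ≤ y) hmem h0 hgapU hmono m0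
    exact ⟨m, by exact_mod_cast h1, by exact_mod_cast h2, h3⟩

set_option maxHeartbeats 1000000 in
theorem hit0 (w m0 : ℕ) :
    ∃ m : ℕ, m0 < m ∧ m ≤ m0 + Nat.fib (w+4) ∧ fr m < aψ^(w+2) := by
  have hA : 0 < aψ^(w+2) := apow_pos _
  have hA1 : aψ^(w+2) < 1 := apow_lt_one (by omega)
  have hF2 : (1:ℤ) ≤ (Nat.fib (w+2):ℤ) := by exact_mod_cast Nat.fib_pos.mpr (by omega)
  have hGb := fibz w
  rcases Nat.even_or_odd w with hw | hw
  · -- even w : h j = σ + (if uf j < 0 then F2 else 0)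
    have hpsiE : ψ^(w+2) = aψ^(w+2) := psi_even (by rcases hw with ⟨k, hk⟩; exact ⟨k+1, by omega⟩)
    set h : ℕ → ℤ := fun j => σf w j + (if uf j < 0 then (Nat.fib (w+2):ℤ) else 0) with hh
    have hmem : ∀ j, Int.fract (((h j : ℤ) : ℝ) * βv) < aψ^(w+2) := by
      intro j
      have hub := uf_ub j
      have hlb := uf_lb j
      by_cases hu : uf j < 0
      · have he : h j = σf w j + (1:ℤ) * (Nat.fib (w+2):ℤ) := by rw [hh]; simp [hu]
        rw [he, fract_sigma, hpsiE]
        have harg : aψ^(w+2) * (uf j + ((1:ℤ):ℝ)) = aψ^(w+2) * (uf j + 1) := by push_cast; ring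
        rw [harg]
        have hnn : (0:ℝ) ≤ uf j + 1 := by nlinarith [bhalf]
        rw [Int.fract_eq_self.mpr ⟨mul_nonneg hA.le hnn,
          by nlinarith [mul_le_of_le_one_right hA.le (show uf j + 1 ≤ 1 by linarith)]⟩]
        nlinarith
      · push_neg at hu
        have he : h j = σf w j + (0:ℤ) * (Nat.fib (w+2):ℤ) := by
          rw [hh]; simp [not_lt.mpr hu]
        rw [he, fract_sigma, hpsiE]
        have harg : aψ^(w+2) * (uf j + ((0:ℤ):ℝ)) = aψ^(w+2) * uf j := by push_cast; ring
        rw [harg]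
        rw [Int.fract_eq_self.mpr ⟨by nlinarith, by nlinarith [ab1, bpos]⟩]
        nlinarith [ab1, bpos]
    have h0 : h 0 ≤ (Nat.fib (w+4):ℤ) := by
      rw [hh]; simp [σf_zero, uf_zero]; try omega
    have hgapU : ∀ j, h (j+1) ≤ h j + (Nat.fib (w+4):ℤ) := by
      intro j
      have hst := σf_step w j
      have hm := ofn_mono j
      have hsp := ofn_step j
      rw [hh]
      by_cases hu : uf j < 0 <;> by_cases hu' : uf (j+1) < 0
      · simp only [if_pos hu, if_pos hu']; nlinarith [hF2]
      · simp only [if_pos hu, if_neg hu']; nlinarith [hF2]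
      · -- uf j ≥ 0, uf (j+1) < 0 : bad case
        simp only [if_neg hu, if_pos hu']
        push_neg at hu
        have hc := cross2 hu hu'.le (Or.inr (ne_of_lt hu'))
        nlinarith [hF2]
      · simp only [if_neg hu, if_neg hu']; nlinarith [hF2]
    have hmono : ∀ j, h j < h (j+1) := by
      intro j
      have hst := σf_step w j
      have hm := ofn_mono j
      have hsp := ofn_step j
      rw [hh]
      by_cases hu : uf j < 0 <;> by_cases hu' : uf (j+1) < 0
      · simp only [if_pos hu, if_pos hu']; nlinarith [hF2, hGb]
      · simp only [if_pos hu, if_neg hu']; nlinarith [hF2, hGb]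
      · simp only [if_neg hu, if_pos hu']; nlinarith [hF2, hGb]
      · simp only [if_neg hu, if_neg hu']; nlinarith [hF2, hGb]
    obtain ⟨m, h1, h2, h3⟩ := seq_skeleton (Nat.fib (w+4):ℤ) (by omega) h
      (fun y => y < aψ^(w+2)) hmem h0 hgapU hmono m0
    exact ⟨m, by exact_mod_cast h1, by exact_mod_cast h2, h3⟩
  · -- odd w : h j = σ - (if 0 < uf j then F2 else 0)
    have hpsiO : ψ^(w+2) = -aψ^(w+2) := psi_odd (by rcases hw with ⟨k, hk⟩; exact ⟨k+1, by omega⟩)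
    set h : ℕ → ℤ := fun j => σf w j - (if 0 < uf j then (Nat.fib (w+2):ℤ) else 0) with hh
    have hmem : ∀ j, Int.fract (((h j : ℤ) : ℝ) * βv) < aψ^(w+2) := by
      intro j
      have hub := uf_ub j
      have hlb := uf_lb j
      by_cases hu : 0 < uf j
      · have he : h j = σf w j + (-1:ℤ) * (Nat.fib (w+2):ℤ) := by rw [hh]; simp [hu]; ring
        rw [he, fract_sigma, hpsiO]
        have harg : (-aψ^(w+2)) * (uf j + ((-1:ℤ):ℝ)) = aψ^(w+2) * (1 - uf j) := by
          push_cast; ring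
        rw [harg]
        rw [Int.fract_eq_self.mpr ⟨by nlinarith [ab1, bpos], by nlinarith [ab1, bpos]⟩]
        nlinarith
      · push_neg at hu
        have he : h j = σf w j + (0:ℤ) * (Nat.fib (w+2):ℤ) := by
          rw [hh]; simp [not_lt.mpr hu]
        rw [he, fract_sigma, hpsiO]
        have harg : (-aψ^(w+2)) * (uf j + ((0:ℤ):ℝ)) = aψ^(w+2) * (- uf j) := by push_cast; ring
        rw [harg]
        rw [Int.fract_eq_self.mpr ⟨by nlinarith, by nlinarith [bhalf]⟩]
        nlinarith [bhalf]
    have h0 : h 0 ≤ (Nat.fib (w+4):ℤ) := by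
      rw [hh]; simp [σf_zero, uf_zero]; try omega
    have hgapU : ∀ j, h (j+1) ≤ h j + (Nat.fib (w+4):ℤ) := by
      intro j
      have hst := σf_step w j
      have hm := ofn_mono j
      have hsp := ofn_step j
      rw [hh]
      by_cases hu : 0 < uf j <;> by_cases hu' : 0 < uf (j+1)
      · simp only [if_pos hu, if_pos hu']; nlinarith [hF2]
      · -- 0 < uf j, uf (j+1) ≤ 0 : bad case
        simp only [if_pos hu, if_neg hu']
        push_neg at hu'
        have hc := cross2 hu.le hu' (Or.inl (ne_of_gt hu))
        nlinarith [hF2]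
      · simp only [if_neg hu, if_pos hu']; nlinarith [hF2]
      · simp only [if_neg hu, if_neg hu']; nlinarith [hF2]
    have hmono : ∀ j, h j < h (j+1) := by
      intro j
      have hst := σf_step w j
      have hm := ofn_mono j
      have hsp := ofn_step j
      rw [hh]
      by_cases hu : 0 < uf j <;> by_cases hu' : 0 < uf (j+1)
      · simp only [if_pos hu, if_pos hu']; nlinarith [hF2, hGb]
      · simp only [if_pos hu, if_neg hu']; nlinarith [hF2, hGb]
      · simp only [if_neg hu, if_pos hu']; nlinarith [hF2, hGb]
      · simp only [if_neg hu, if_neg hu']; nlinarith [hF2, hGb]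
    obtain ⟨m, h1, h2, h3⟩ := seq_skeleton (Nat.fib (w+4):ℤ) (by omega) h
      (fun y => y < aψ^(w+2)) hmem h0 hgapU hmono m0
    exact ⟨m, by exact_mod_cast h1, by exact_mod_cast h2, h3⟩


/-! ### fract arithmetic helpers -/

lemma fract_addf (a b : ℝ) : Int.fract (a + b) = Int.fract (Int.fract a + Int.fract b) := by
  rw [Int.fract_eq_fract]
  exact ⟨⌊a⌋ + ⌊b⌋, by unfold Int.fract; push_cast; ring⟩

lemma fr_add (m p : ℕ) : fr (m + p) = Int.fract (fr m + fr p) := by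
  unfold fr
  rw [show ((m+p : ℕ):ℝ) * βv = (m:ℝ)*βv + (p:ℝ)*βv by push_cast; ring]
  exact fract_addf _ _

lemma fract_shift1 {y : ℝ} (h1 : 1 ≤ y) (h2 : y < 2) : Int.fract y = y - 1 := by
  have h3 : Int.fract ((y-1) + ((1:ℤ):ℝ)) = Int.fract (y-1) := Int.fract_add_intCast _ _
  rw [show (y-1) + ((1:ℤ):ℝ) = y by push_cast; ring] at h3
  rw [h3, Int.fract_eq_self.mpr ⟨by linarith, by linarith⟩]

lemma fr_bounds (m : ℕ) : 0 ≤ fr m ∧ fr m < 1 := ⟨Int.fract_nonneg _, Int.fract_lt_one _⟩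

/-! ### the upper bound -/

set_option maxHeartbeats 1000000 in
theorem upper (i L p z : ℕ) (hz2 : 2 ≤ z) (hzl : Nat.fib z ≤ p) (hzu : p < Nat.fib (z+1))
    (hper : ∀ t, t + p < L → fibWord (i+t) = fibWord (i+t+p)) :
    L < p + Nat.fib (z+2) := by
  by_contra hcon
  push_neg at hcon
  obtain ⟨w, rfl⟩ : ∃ w, z = w+2 := ⟨z-2, by omega⟩
  have hwfz : Nat.fib (w+2+2) = Nat.fib (w+4) := rfl
  rw [hwfz] at hcon
  have hp1 : 1 ≤ p := le_trans (Nat.fib_pos.mpr (by omega)) hzl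
  have hfw4 : 3 ≤ Nat.fib (w+4) := by
    calc 3 = Nat.fib 4 := by decide
      _ ≤ Nat.fib (w+4) := Nat.fib_mono (by omega)
  set ρ := fr p with hρ
  obtain ⟨hMZ1, hMZ2⟩ := MZ p (w+2) hz2 hzl hzu
  have hMZ1' : aψ^(w+2) ≤ fr p := hMZ1
  have hMZ2' : fr p ≤ 1 - aψ^(w+2) := hMZ2
  have hρb := fr_bounds p
  have hA : 0 < aψ^(w+2) := apow_pos _
  have hA2 : aψ^(w+2) ≤ βv := by rw [← asq]; exact apow_anti_le (by omega)
  have hmatch : ∀ m : ℕ, i + 1 ≤ m → m + p ≤ i + L → (aψ ≤ fr m ↔ aψ ≤ fr (m+p)) := by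
    intro m h1 h2
    have ht : (m - 1 - i) + p < L := by omega
    have hpe := hper (m-1-i) ht
    rw [show i + (m-1-i) = m - 1 by omega] at hpe
    have i1 := fw_one_iff (m-1)
    have i2 := fw_one_iff (m-1+p)
    rw [show m-1+1 = m by omega] at i1
    rw [show m-1+p+1 = m+p by omega] at i2
    rw [← i1, ← i2, hpe]
  rcases le_or_gt ρ βv with hc1 | hc1
  · -- (a) small positive shift
    obtain ⟨m, hm1, hm2, hm3⟩ := hit1 w i
    have hiff := hmatch m (by omega) (by omega)
    have hm_in : aψ ≤ fr m := by linarith [ab1]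
    have hfrm := fr_bounds m
    have h5 : fr (m+p) = fr m + ρ - 1 := by
      rw [fr_add, fract_shift1 (by linarith) (by linarith)]
    have : ¬ (aψ ≤ fr (m+p)) := by
      rw [h5]
      nlinarith [ahalf, bhalf]
    exact this (hiff.mp hm_in)
  · rcases le_or_gt ρ (1/2) with hc2 | hc2
    · -- (b) βv < ρ ≤ 1/2
      obtain ⟨m', hm1, hm2, hm3⟩ := hit1 0 (i+p)
      have hf04 : Nat.fib (0+4) = 3 := by decide
      rw [hf04] at hm2
      have ha02 : aψ^(0+2) = βv := by rw [pow_succ, pow_one]; nlinarith [asq]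
      rw [ha02] at hm3
      set m := m' - p with hm
      have hmm : m' = m + p := by omega
      have hiff := hmatch m (by omega) (by omega)
      have hin' : aψ ≤ fr (m+p) := by rw [← hmm]; linarith [ab1]
      have hfrm := fr_bounds m
      have hmne : ¬ (aψ ≤ fr m) := by
        intro hin
        have h5 : fr (m+p) = fr m + ρ - 1 := by
          rw [fr_add, fract_shift1 (by linarith [ab1]) (by linarith)]
        rw [h5] at hin'
        linarith [ahalf]
      exact hmne (hiff.mpr hin')
    · rcases lt_or_ge ρ aψ with hc3 | hc3
      · -- (c) 1/2 < ρ < aψ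
        obtain ⟨m, hm1, hm2, hm3⟩ := hit1 0 i
        have hf04 : Nat.fib (0+4) = 3 := by decide
        rw [hf04] at hm2
        have ha02 : aψ^(0+2) = βv := by rw [pow_succ, pow_one]; nlinarith [asq]
        rw [ha02] at hm3
        have hiff := hmatch m (by omega) (by omega)
        have hm_in : aψ ≤ fr m := by linarith [ab1]
        have hfrm := fr_bounds m
        have h5 : fr (m+p) = fr m + ρ - 1 := by
          rw [fr_add, fract_shift1 (by linarith [ab1]) (by linarith)]
        have : ¬ (aψ ≤ fr (m+p)) := by
          rw [h5]; linarith
        exact this (hiff.mp hm_in)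
      · -- (d) aψ ≤ ρ < 1
        obtain ⟨m'', hm1, hm2, hm3⟩ := hit0 w (i+1)
        set m := m'' - 1 with hm
        have hmm : m'' = m + 1 := by omega
        have hiff := hmatch m (by omega) (by omega)
        have hfrm := fr_bounds m
        have hfrm'' := fr_bounds m''
        have hfr1 : fr 1 = βv := by
          unfold fr
          rw [show ((1:ℕ):ℝ)*βv = βv by push_cast; ring]
          exact Int.fract_eq_self.mpr ⟨bpos.le, by linarith [bhalf]⟩
        have hstep : fr m'' = Int.fract (fr m + βv) := by
          rw [hmm, fr_add, hfr1]
        have hwrap : 1 ≤ fr m + βv := by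
          by_contra hnw
          push_neg at hnw
          rw [hstep, Int.fract_eq_self.mpr ⟨by linarith [hfrm.1, bpos], hnw⟩] at hm3
          linarith [hfrm.1]
        have hYa : aψ ≤ fr m := by linarith [ab1]
        have hm''eq : fr m'' = fr m + βv - 1 := by
          rw [hstep, fract_shift1 hwrap (by linarith [hfrm.2, bhalf])]
        have h5 : fr (m+p) = fr m + ρ - 1 := by
          rw [fr_add, fract_shift1 (by linarith [ahalf]) (by linarith)]
        have hnotin : ¬ (aψ ≤ fr (m+p)) := by
          rw [h5]
          -- fr m + ρ − 1 = fr m'' + 1 − βv + ρ − 1 = fr m'' + ρ − βv < aψ^{w+2} + ρ − βv ≤ ρ − βv + ... 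
          -- use: fr m'' < aψ^{w+2} ≤ 1 − ρ (hMZ2): value < (1−ρ) + ρ − βv = 1 − βv = aψ ✓
          have : fr m'' ≤ 1 - ρ - 0 := by linarith [hMZ2, hm3]
          nlinarith [ab1]
        exact hnotin (hiff.mp hYa)

lemma factor_getD {x : List ℕ} {i : ℕ}
    (hx : x = (List.range x.length).map (fun t => fibWord (i + t))) {t : ℕ}
    (ht : t < x.length) : x.getD t 0 = fibWord (i + t) := by
  conv_lhs => rw [hx]
  rw [List.getD_eq_getElem _ _ (by simpa using ht)]
  simp

set_option maxHeartbeats 1000000 in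
theorem exp_lt {r : ℝ} (hr : r ∈ fibExponents) : r < (5 + Real.sqrt 5)/2 := by
  obtain ⟨x, p, ⟨i, hx⟩, hne, ⟨⟨hp1, hper⟩, hmin⟩, rfl⟩ := hr
  set L := x.length with hLdef
  have hL1 : 1 ≤ L := List.length_pos_iff.mpr hne
  have hB1 : (1:ℝ) < (5 + Real.sqrt 5)/2 := by nlinarith [s5lb]
  have hppos : (0:ℝ) < (p:ℝ) := by exact_mod_cast hp1
  rcases le_or_gt L p with hLp | hpL
  · have h1 : (L:ℝ)/(p:ℝ) ≤ 1 := by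
      rw [div_le_one hppos]; exact_mod_cast hLp
    linarith
  · have hper' : ∀ t, t + p < L → fibWord (i+t) = fibWord (i+t+p) := by
      intro t ht
      have h1 := hper t ht
      rw [factor_getD hx (by omega), factor_getD hx (by omega)] at h1
      rw [show i + (t+p) = i + t + p by ring] at h1
      exact h1
    obtain ⟨z, hz2, hzl, hzu⟩ := exists_z p hp1
    have hup := upper i L p z hz2 hzl hzu hper'
    have hkey : 2*(L:ℝ) < (5 + Real.sqrt 5) * (p:ℝ) := by
      have hfib : (Nat.fib (z+2) : ℝ) = ((3 + Real.sqrt 5)/2) * (Nat.fib z : ℝ) + ψ ^ z :=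
        fib_phisq z
      have hψ : |ψ^z| = aψ^z := abs_psi_pow z
      have hψ1 : aψ^z < 1 := apow_lt_one (by omega)
      have hψ2 : ψ^z ≤ aψ^z := le_of_abs_le hψ.le
      have hc1 : (L:ℝ) + 1 ≤ (p:ℝ) + (Nat.fib (z+2):ℝ) := by exact_mod_cast hup
      have hfz : (Nat.fib z : ℝ) ≤ (p:ℝ) := by exact_mod_cast hzl
      have hprod : (0:ℝ) ≤ (3 + Real.sqrt 5) * ((p:ℝ) - (Nat.fib z:ℝ)) :=
        mul_nonneg (by nlinarith [s5lb]) (by linarith)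
      nlinarith [s5lb]
    rw [div_lt_iff₀ hppos]
    linarith


/-! ### the witness: high powers near the critical exponent -/

lemma fr_fib (w : ℕ) (hw : Even w) : fr (Nat.fib (w+2)) = aψ^(w+2) := by
  unfold fr
  have hb := fib_beta w
  rw [show ((Nat.fib (w+2) : ℕ):ℝ) * βv = ψ^(w+2) + ((Nat.fib w : ℤ):ℝ) by push_cast at hb ⊢; linarith,
    Int.fract_add_intCast, psi_even (by rcases hw with ⟨k, hk⟩; exact ⟨k+1, by omega⟩)]
  exact Int.fract_eq_self.mpr ⟨(apow_pos _).le, apow_lt_one (by omega)⟩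

set_option maxHeartbeats 1000000 in
lemma witness_avoid (w : ℕ) (hw : Even w) :
    ∀ r : ℕ, 1 ≤ r → r + 1 ≤ Nat.fib (w+4) →
      fr (Nat.fib (w+3) + r) < 1 - aψ^(w+2) := by
  intro r hr1 hru
  have hb := fib_beta (w+1)
  rw [show w+1+2 = w+3 from rfl] at hb
  have hpsiO : ψ^(w+3) = -aψ^(w+3) := psi_odd
    (by rcases hw with ⟨k, hk⟩; exact ⟨k+1, by omega⟩)
  have key : fr (Nat.fib (w+3) + r) = Int.fract (fr r + ψ^(w+3)) := by
    unfold fr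
    rw [show ((Nat.fib (w+3) + r : ℕ):ℝ) * βv
        = ((r:ℝ)*βv + ψ^(w+3)) + ((Nat.fib (w+1) : ℤ):ℝ) by push_cast at hb ⊢; linarith,
      Int.fract_add_intCast]
    rw [show (r:ℝ)*βv + ψ^(w+3) = (Int.fract ((r:ℝ)*βv) + ψ^(w+3)) + ((⌊(r:ℝ)*βv⌋ : ℤ):ℝ) by
      unfold Int.fract; push_cast; ring, Int.fract_add_intCast]
  obtain ⟨zr, hzr2, hzrl, hzru⟩ := exists_z r hr1
  have hzrw : zr ≤ w+3 := by
    by_contra hcon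
    have h1 : Nat.fib (w+4) ≤ Nat.fib zr := Nat.fib_mono (by omega)
    omega
  obtain ⟨h1, h2⟩ := MZ r zr hzr2 hzrl hzru
  have h1' : aψ^(w+3) ≤ fr r := le_trans (apow_anti_le hzrw) h1
  have h2' : fr r ≤ 1 - aψ^(w+3) := by
    have := apow_anti_le hzrw
    have h2'' : fr r ≤ 1 - aψ^zr := h2
    linarith
  have hA3 : 0 < aψ^(w+3) := apow_pos _
  have hsm : aψ^(w+3) < aψ^(w+2) := apow_anti (by omega)
  have hhalf : aψ^(w+2) < 2*aψ^(w+3) := by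
    have : aψ^(w+3) = aψ^(w+2) * aψ := by ring
    nlinarith [ahalf, apow_pos (w+2)]
  rw [key, hpsiO]
  rw [Int.fract_eq_self.mpr ⟨by linarith, by linarith⟩]
  linarith

set_option maxHeartbeats 1000000 in
lemma witness_period (w : ℕ) (hw : Even w) :
    ∀ t, t + Nat.fib (w+2) < Nat.fib (w+4) + Nat.fib (w+2) - 2 →
      fibWord (Nat.fib (w+3) + t) = fibWord (Nat.fib (w+3) + t + Nat.fib (w+2)) := by
  intro t ht
  have hfw4 : 3 ≤ Nat.fib (w+4) := by
    calc 3 = Nat.fib 4 := by decide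
      _ ≤ Nat.fib (w+4) := Nat.fib_mono (by omega)
  have hρ : fr (Nat.fib (w+2)) = aψ^(w+2) := fr_fib w hw
  have hA : 0 < aψ^(w+2) := apow_pos _
  have hA2 : aψ^(w+2) ≤ βv := by rw [← asq]; exact apow_anti_le (by omega)
  -- the two avoidance facts
  have hAV1 := witness_avoid w hw (t+1) (by omega) (by omega)
  have hAV2 := witness_avoid w hw (t+2) (by omega) (by omega)
  rw [show Nat.fib (w+3) + (t+1) = Nat.fib (w+3) + t + 1 by ring] at hAV1
  rw [show Nat.fib (w+3) + (t+2) = (Nat.fib (w+3) + t + 1) + 1 by ring] at hAV2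
  apply fw_match
  set m := Nat.fib (w+3) + t + 1 with hm
  rw [show Nat.fib (w+3) + t + Nat.fib (w+2) + 1 = m + Nat.fib (w+2) by omega]
  set X := fr m with hX
  have hXb := fr_bounds m
  have hfr1 : fr 1 = βv := by
    unfold fr
    rw [show ((1:ℕ):ℝ)*βv = βv by push_cast; ring]
    exact Int.fract_eq_self.mpr ⟨bpos.le, by linarith [bhalf]⟩
  have hstep : fr (m+1) = Int.fract (X + βv) := by rw [fr_add, hfr1]
  have hshift : fr (m + Nat.fib (w+2)) = Int.fract (X + aψ^(w+2)) := by
    rw [fr_add, hρ]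
  rcases lt_or_ge X (aψ - aψ^(w+2)) with hsmall | hbig
  · -- both sides below aψ
    have hval : fr (m + Nat.fib (w+2)) = X + aψ^(w+2) := by
      rw [hshift, Int.fract_eq_self.mpr ⟨by linarith [hXb.1], by linarith [ab1, alt1]⟩]
    constructor
    · intro hc; linarith
    · intro hc; rw [hval] at hc; linarith
  · -- claim X ≥ aψ
    have hXa : aψ ≤ X := by
      by_contra hc
      push_neg at hc
      -- X ∈ [aψ − ρ, aψ): then fr (m+1) = X + βv ∈ [1−ρ, 1): contradicts hAV2
      have hv : fr (m+1) = X + βv := by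
        rw [hstep, Int.fract_eq_self.mpr ⟨by linarith [hXb.1, bpos], by linarith [ab1]⟩]
      rw [hv] at hAV2
      linarith [ab1]
    -- both sides ≥ aψ
    have hval : fr (m + Nat.fib (w+2)) = X + aψ^(w+2) := by
      rw [hshift, Int.fract_eq_self.mpr ⟨by linarith [hXb.1], by linarith [hAV1]⟩]
    constructor
    · intro _; rw [hval]; linarith
    · intro _; exact hXa

set_option maxHeartbeats 1000000 in
lemma witness_mem (w : ℕ) (hw : Even w) :
    ∃ r ∈ fibExponents,
      ((Nat.fib (w+4) + Nat.fib (w+2) - 2 : ℕ):ℝ) / ((Nat.fib (w+2) : ℕ):ℝ) ≤ r := by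
  classical
  set p := Nat.fib (w+2) with hp
  set i := Nat.fib (w+3) with hi
  set L := Nat.fib (w+4) + p - 2 with hL
  have hp1 : 1 ≤ p := Nat.fib_pos.mpr (by omega)
  have hfw4 : 3 ≤ Nat.fib (w+4) := by
    calc 3 = Nat.fib 4 := by decide
      _ ≤ Nat.fib (w+4) := Nat.fib_mono (by omega)
  have hL2 : 2 ≤ L := by omega
  set x : List ℕ := (List.range L).map (fun t => fibWord (i + t)) with hx
  have hxlen : x.length = L := by simp [hx]
  have hx' : x = (List.range x.length).map (fun t => fibWord (i + t)) := by rw [hxlen]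
  have hfac : IsFibFactor x := ⟨i, hx'⟩
  have hne : x ≠ [] := by
    intro hcon
    rw [hcon] at hxlen
    simp at hxlen
    omega
  have hperiod : HasPeriod x p := by
    refine ⟨hp1, ?_⟩
    intro t ht
    rw [hxlen] at ht
    rw [factor_getD hx' (by omega), factor_getD hx' (by omega)]
    rw [show i + (t+p) = i + t + p by ring]
    exact witness_period w hw t ht
  have hex : ∃ q, HasPeriod x q := ⟨p, hperiod⟩
  set p0 := Nat.find hex with hp0
  have hleast : IsLeast {q | HasPeriod x q} p0 :=
    ⟨Nat.find_spec hex, fun q hq => Nat.find_min' hex hq⟩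
  have hp0p : p0 ≤ p := Nat.find_min' hex hperiod
  have hp01 : 1 ≤ p0 := (Nat.find_spec hex).1
  refine ⟨(x.length : ℝ)/(p0:ℝ), ⟨x, p0, hfac, hne, hleast, rfl⟩, ?_⟩
  rw [hxlen]
  apply div_le_div_of_nonneg_left (by positivity) (by exact_mod_cast hp01)
  exact_mod_cast hp0p

end FibCrit


open FibCrit
set_option maxHeartbeats 1000000 in
/-- The critical exponent of the Fibonacci word is 2 + α = (5 + √5)/2, and
this supremum is not attained. -/
theorem fibWord_critical_exponent :
    IsLUB fibExponents ((5 + Real.sqrt 5) / 2) ∧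
      ((5 + Real.sqrt 5) / 2) ∉ fibExponents := by
  constructor
  · constructor
    · intro r hr
      exact (exp_lt hr).le
    · intro b hb
      by_contra hcon
      push_neg at hcon
      obtain ⟨k, hk⟩ := exists_nat_gt (3 / ((5 + Real.sqrt 5)/2 - b))
      have hBb : 0 < (5 + Real.sqrt 5)/2 - b := by linarith
      have hk3 : 3 < (k:ℝ) * ((5 + Real.sqrt 5)/2 - b) := (div_lt_iff₀ hBb).mp hk
      set w := 2*k + 2 with hw
      have hwe : Even w := ⟨k+1, by omega⟩
      obtain ⟨r, hrmem, hrge⟩ := witness_mem w hwe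
      have hrb : r ≤ b := hb hrmem
      have hfibge : (k:ℝ) ≤ (Nat.fib (w+2) : ℝ) := by
        have h1 : k < Nat.fib (k+2) := fib_big k
        have h2 : Nat.fib (k+2) ≤ Nat.fib (w+2) := Nat.fib_mono (by omega)
        exact_mod_cast le_trans h1.le h2
      have hfw4 : 3 ≤ Nat.fib (w+4) := by
        calc 3 = Nat.fib 4 := by decide
          _ ≤ Nat.fib (w+4) := Nat.fib_mono (by omega)
      have hratio : b < ((Nat.fib (w+4) + Nat.fib (w+2) - 2 : ℕ):ℝ) / ((Nat.fib (w+2):ℕ):ℝ) := by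
        have hppos : (0:ℝ) < ((Nat.fib (w+2):ℕ):ℝ) := by
          have := Nat.fib_pos.mpr (show 0 < w+2 by omega)
          exact_mod_cast this
        rw [lt_div_iff₀ hppos]
        have hnum : ((Nat.fib (w+4) + Nat.fib (w+2) - 2 : ℕ):ℝ)
            = (Nat.fib (w+4):ℝ) + (Nat.fib (w+2):ℝ) - 2 := by
          rw [Nat.cast_sub (by omega)]
          push_cast; ring
        rw [hnum]
        have hphi := fib_phisq (w+2)
        rw [show w+2+2 = w+4 from rfl] at hphi
        have habs : |ψ^(w+2)| = aψ^(w+2) := abs_psi_pow _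
        have hlt1 : aψ^(w+2) < 1 := apow_lt_one (by omega)
        have hneg : -1 ≤ ψ^(w+2) := by
          have := neg_abs_le (ψ^(w+2))
          rw [habs] at this
          linarith
        have hprod : (k:ℝ) * ((5 + Real.sqrt 5)/2 - b)
            ≤ (Nat.fib (w+2):ℝ) * ((5 + Real.sqrt 5)/2 - b) :=
          mul_le_mul_of_nonneg_right hfibge hBb.le
        nlinarith [hk3]
      linarith
  · intro hmem
    obtain ⟨x, p, hfac, hne, hleast, heq⟩ := hmem
    have hp1 : 1 ≤ p := hleast.1.1
    have hppos : (0:ℝ) < (p:ℝ) := by exact_mod_cast hp1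
    have hirr : Irrational (Real.sqrt 5) :=
      (by norm_num : Nat.Prime 5).irrational_sqrt
    apply hirr
    refine ⟨2 * (x.length:ℚ) / (p:ℚ) - 5, ?_⟩
    have h5 : Real.sqrt 5 = 2*((x.length:ℝ)/(p:ℝ)) - 5 := by
      rw [← heq]; ring
    rw [h5]
    push_cast
    ring
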